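/- Fix ℓ, c, d ∈ ℕ. For every C²_{ℓ,c} formula φ with free variables among {x,y} there exist n ∈ ℕ, C²_{ℓ,c} formulas α₁(x),…,αₙ(x) with one free variable x, C²_{ℓ,c} formulas β₁(y),…,βₙ(y) with one free variable y, and formulas γ₁(x,y),…,γₙ(x,y), each of which is one of the five formulas E(x,y)∧E(y,x), E(x,y)∧¬E(y,x), ¬E(x,y)∧E(y,x), ¬E(x,y)∧¬E(y,x)∧x≠y, x=y, such that for every finite directed labelled graph G of dimension d and every assignment of x and y to nodes of G, φ holds if and only if the disjunction ⋁_{i=1}^{n} (α_i(x) ∧ β_i(y) ∧ γ_i(x,y)) holds. -/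

import Mathlib

/-- The two variables of the logic `C²`. -/
inductive C2Var : Type
  | x : C2Var
  | y : C2Var
deriving DecidableEq

/-- Formulas of `C²`, the two-variable fragment of first-order logic with counting, over
the signature with one binary relation symbol `E` and unary predicates `P₁,…,P_d`.
`exN k v φ` is the counting quantifier `∃_k v. φ` ("at least `k` elements"). -/
inductive C2 (d : ℕ) : Type
  | eq : C2Var → C2Var → C2 d
  | edge : C2Var → C2Var → C2 d
  | pred : Fin d → C2Var → C2 d
  | not : C2 d → C2 d
  | and : C2 d → C2 d → C2 d
  | or : C2 d → C2 d → C2 d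
  | exN : ℕ → C2Var → C2 d → C2 d

/-- Satisfaction of a `C²` formula in a finite directed labelled graph `(V, E, lab)`
under an assignment `a` of the two variables. -/
def C2.sat {d : ℕ} {V : Type} [Fintype V] (E : V → V → Prop) (lab : V → Fin d → Bool) :
    C2 d → (C2Var → V) → Prop
  | .eq s t, a => a s = a t
  | .edge s t, a => E (a s) (a t)
  | .pred i s, a => lab (a s) i = true
  | .not φ, a => ¬ C2.sat E lab φ a
  | .and φ ψ, a => C2.sat E lab φ a ∧ C2.sat E lab ψ a
  | .or φ ψ, a => C2.sat E lab φ a ∨ C2.sat E lab ψ a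
  | .exN k w φ, a => k ≤ Nat.card {u : V | C2.sat E lab φ (Function.update a w u)}

/-- Quantifier nesting depth of a `C²` formula. -/
def C2.depth {d : ℕ} : C2 d → ℕ
  | .eq _ _ => 0
  | .edge _ _ => 0
  | .pred _ _ => 0
  | .not φ => φ.depth
  | .and φ ψ => max φ.depth ψ.depth
  | .or φ ψ => max φ.depth ψ.depth
  | .exN _ _ φ => φ.depth + 1

/-- Counting rank of a `C²` formula: the maximal `k` occurring in a counting
quantifier `∃_k`. -/
def C2.rank {d : ℕ} : C2 d → ℕ
  | .eq _ _ => 0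
  | .edge _ _ => 0
  | .pred _ _ => 0
  | .not φ => φ.rank
  | .and φ ψ => max φ.rank ψ.rank
  | .or φ ψ => max φ.rank ψ.rank
  | .exN k _ φ => max k φ.rank

/-- Free variables of a `C²` formula. -/
def C2.freeVars {d : ℕ} : C2 d → Finset C2Var
  | .eq s t => {s, t}
  | .edge s t => {s, t}
  | .pred _ s => {s}
  | .not φ => φ.freeVars
  | .and φ ψ => φ.freeVars ∪ ψ.freeVars
  | .or φ ψ => φ.freeVars ∪ ψ.freeVars
  | .exN _ w φ => φ.freeVars.erase w

/-- `E(x,y) ∧ E(y,x)`. -/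
def gammaA (d : ℕ) : C2 d := .and (.edge .x .y) (.edge .y .x)
/-- `E(x,y) ∧ ¬E(y,x)`. -/
def gammaB (d : ℕ) : C2 d := .and (.edge .x .y) (.not (.edge .y .x))
/-- `¬E(x,y) ∧ E(y,x)`. -/
def gammaC (d : ℕ) : C2 d := .and (.not (.edge .x .y)) (.edge .y .x)
/-- `¬E(x,y) ∧ ¬E(y,x) ∧ x ≠ y`. -/
def gammaD (d : ℕ) : C2 d :=
  .and (.and (.not (.edge .x .y)) (.not (.edge .y .x))) (.not (.eq .x .y))
/-- `x = y`. -/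
def gammaE (d : ℕ) : C2 d := .eq .x .y

namespace Stmt4

/-- `x = x`, a tautology with free variable `x`. -/
def eqX (d : ℕ) : C2 d := .eq .x .x
/-- `y = y`, a tautology with free variable `y`. -/
def eqY (d : ℕ) : C2 d := .eq .y .y

/-- pairwise conjunction of two DNF lists. -/
def pprod {d : ℕ} (L M : List (C2 d × C2 d)) : List (C2 d × C2 d) :=
  L.flatMap fun p => M.map fun q => (p.1.and q.1, p.2.and q.2)

/-- DNF of the negation of a DNF list. -/
def negD {d : ℕ} (L : List (C2 d × C2 d)) : List (C2 d × C2 d) :=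
  L.foldr (fun p acc => pprod [(p.1.not, eqY d), (eqX d, p.2.not)] acc) [(eqX d, eqY d)]

/-- Given assumed truth values `b1, b2, b3` for the cross atoms `E(x,y)`, `E(y,x)`, `x=y`,
a DNF list of pairs (unary-in-x, unary-in-y) equivalent to the formula. -/
def dnf {d : ℕ} (b1 b2 b3 : Bool) : C2 d → List (C2 d × C2 d)
  | .eq .x .x => [(eqX d, eqY d)]
  | .eq .y .y => [(eqX d, eqY d)]
  | .eq .x .y => if b3 then [(eqX d, eqY d)] else []
  | .eq .y .x => if b3 then [(eqX d, eqY d)] else []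
  | .edge .x .x => []
  | .edge .y .y => []
  | .edge .x .y => if b1 then [(eqX d, eqY d)] else []
  | .edge .y .x => if b2 then [(eqX d, eqY d)] else []
  | .pred i .x => [(.pred i .x, eqY d)]
  | .pred i .y => [(eqX d, .pred i .y)]
  | .not ψ => negD (dnf b1 b2 b3 ψ)
  | .and ψ χ => pprod (dnf b1 b2 b3 ψ) (dnf b1 b2 b3 χ)
  | .or ψ χ => dnf b1 b2 b3 ψ ++ dnf b1 b2 b3 χ
  | .exN k .x ψ => [(eqX d, .exN k .x ψ)]
  | .exN k .y ψ => [(.exN k .y ψ, eqY d)]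

def Good {d : ℕ} (m r : ℕ) (p : C2 d × C2 d) : Prop :=
  p.1.depth ≤ m ∧ p.1.rank ≤ r ∧ p.1.freeVars ⊆ {C2Var.x} ∧
  p.2.depth ≤ m ∧ p.2.rank ≤ r ∧ p.2.freeVars ⊆ {C2Var.y}

lemma good_mono {d m r m' r'} {p : C2 d × C2 d} (h1 : m ≤ m') (h2 : r ≤ r')
    (h : Good m r p) : Good m' r' p := by
  obtain ⟨a, b, c, e, f, g⟩ := h
  exact ⟨a.trans h1, b.trans h2, c, e.trans h1, f.trans h2, g⟩

lemma good_TT {d m r} : Good m r (eqX d, eqY d) := by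
  refine ⟨Nat.zero_le _, Nat.zero_le _, ?_, Nat.zero_le _, Nat.zero_le _, ?_⟩ <;>
    simp [eqX, eqY, C2.freeVars]

lemma good_pprod {d m r} {L M : List (C2 d × C2 d)}
    (hL : ∀ p ∈ L, Good m r p) (hM : ∀ q ∈ M, Good m r q) :
    ∀ t ∈ pprod L M, Good m r t := by
  intro t ht
  simp only [pprod, List.mem_flatMap, List.mem_map] at ht
  obtain ⟨p, hp, q, hq, rfl⟩ := ht
  obtain ⟨a, b, c, e, f, g⟩ := hL p hp
  obtain ⟨a', b', c', e', f', g'⟩ := hM q hq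
  exact ⟨by simp [C2.depth, Nat.max_le, a, a'], by simp [C2.rank, Nat.max_le, b, b'],
    Finset.union_subset c c', by simp [C2.depth, Nat.max_le, e, e'],
    by simp [C2.rank, Nat.max_le, f, f'], Finset.union_subset g g'⟩

lemma good_negD {d m r} {L : List (C2 d × C2 d)} (hL : ∀ p ∈ L, Good m r p) :
    ∀ q ∈ negD L, Good m r q := by
  induction L with
  | nil =>
    intro q hq
    simp only [negD, List.foldr, List.mem_singleton] at hq
    subst hq; exact good_TT
  | cons p L ih =>
    have hstep : negD (p :: L) = pprod [(p.1.not, eqY d), (eqX d, p.2.not)] (negD L) := rfl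
    rw [hstep]
    have hp := hL p (List.mem_cons_self)
    obtain ⟨a, b, c, e, f, g⟩ := hp
    refine good_pprod ?_ (ih fun q hq => hL q (List.mem_cons_of_mem _ hq))
    intro q hq
    simp only [List.mem_cons, List.mem_singleton, List.not_mem_nil, or_false] at hq
    rcases hq with rfl | rfl
    · exact ⟨a, b, c, Nat.zero_le _, Nat.zero_le _, by simp [eqY, C2.freeVars]⟩
    · exact ⟨Nat.zero_le _, Nat.zero_le _, by simp [eqX, C2.freeVars], e, f, g⟩

lemma fv_sub {d : ℕ} (φ : C2 d) : φ.freeVars ⊆ {C2Var.x, C2Var.y} := by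
  intro s _
  cases s <;> simp

lemma good_dnf {d : ℕ} (b1 b2 b3 : Bool) (φ : C2 d) :
    ∀ p ∈ dnf b1 b2 b3 φ, Good φ.depth φ.rank p := by
  induction φ with
  | eq s t =>
    cases s <;> cases t <;> intro p hp <;>
      simp only [dnf, List.mem_singleton] at hp <;>
      first
      | (subst hp; exact good_TT)
      | (split at hp
         · rw [List.mem_singleton] at hp; subst hp; exact good_TT
         · exact absurd hp List.not_mem_nil)
  | edge s t =>
    cases s <;> cases t <;> intro p hp <;>
      simp only [dnf] at hp <;>
      first
      | exact absurd hp List.not_mem_nil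
      | (split at hp
         · rw [List.mem_singleton] at hp; subst hp; exact good_TT
         · exact absurd hp List.not_mem_nil)
  | pred i s =>
    cases s <;> intro p hp <;> simp only [dnf, List.mem_singleton] at hp <;> subst hp
    · exact ⟨Nat.le_refl _, Nat.le_refl _, by simp [C2.freeVars],
        Nat.zero_le _, Nat.zero_le _, by simp [eqY, C2.freeVars]⟩
    · exact ⟨Nat.zero_le _, Nat.zero_le _, by simp [eqX, C2.freeVars],
        Nat.le_refl _, Nat.le_refl _, by simp [C2.freeVars]⟩
  | not ψ ih => exact good_negD ih
  | and ψ χ ih1 ih2 =>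
    refine good_pprod (fun p hp => good_mono ?_ ?_ (ih1 p hp))
      (fun q hq => good_mono ?_ ?_ (ih2 q hq)) <;>
      simp [C2.depth, C2.rank]
  | or ψ χ ih1 ih2 =>
    intro p hp
    rw [show dnf b1 b2 b3 (ψ.or χ) = dnf b1 b2 b3 ψ ++ dnf b1 b2 b3 χ from rfl,
      List.mem_append] at hp
    rcases hp with hp | hp
    · exact good_mono (by simp [C2.depth]) (by simp [C2.rank]) (ih1 p hp)
    · exact good_mono (by simp [C2.depth]) (by simp [C2.rank]) (ih2 p hp)
  | exN k w ψ ih =>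
    cases w <;> intro p hp <;> simp only [dnf, List.mem_singleton] at hp <;> subst hp
    · refine ⟨Nat.zero_le _, Nat.zero_le _, by simp [eqX, C2.freeVars],
        Nat.le_refl _, Nat.le_refl _, ?_⟩
      intro t ht
      rw [show (C2.exN k C2Var.x ψ).freeVars = ψ.freeVars.erase C2Var.x from rfl,
        Finset.mem_erase] at ht
      cases t
      · exact absurd rfl ht.1
      · simp
    · refine ⟨Nat.le_refl _, Nat.le_refl _, ?_, Nat.zero_le _, Nat.zero_le _,
        by simp [eqY, C2.freeVars]⟩
      intro t ht
      rw [show (C2.exN k C2Var.y ψ).freeVars = ψ.freeVars.erase C2Var.y from rfl,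
        Finset.mem_erase] at ht
      cases t
      · simp
      · exact absurd rfl ht.1

end Stmt4

namespace Stmt4

section Sem

variable {d : ℕ} {V : Type} [Fintype V] (E : V → V → Prop) (lab : V → Fin d → Bool)
  (a : C2Var → V)

lemma pprod_sat (L M : List (C2 d × C2 d)) :
    (∃ t ∈ pprod L M, C2.sat E lab t.1 a ∧ C2.sat E lab t.2 a) ↔
      (∃ p ∈ L, C2.sat E lab p.1 a ∧ C2.sat E lab p.2 a) ∧
      (∃ q ∈ M, C2.sat E lab q.1 a ∧ C2.sat E lab q.2 a) := by
  constructor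
  · rintro ⟨t, ht, h1, h2⟩
    simp only [pprod, List.mem_flatMap, List.mem_map] at ht
    obtain ⟨p, hp, q, hq, rfl⟩ := ht
    exact ⟨⟨p, hp, h1.1, h2.1⟩, ⟨q, hq, h1.2, h2.2⟩⟩
  · rintro ⟨⟨p, hp, hp1, hp2⟩, ⟨q, hq, hq1, hq2⟩⟩
    refine ⟨(p.1.and q.1, p.2.and q.2), ?_, ⟨hp1, hq1⟩, ⟨hp2, hq2⟩⟩
    simp only [pprod, List.mem_flatMap, List.mem_map]
    exact ⟨p, hp, q, hq, rfl⟩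

lemma negD_sat (L : List (C2 d × C2 d)) :
    (∃ q ∈ negD L, C2.sat E lab q.1 a ∧ C2.sat E lab q.2 a) ↔
      ∀ p ∈ L, ¬ (C2.sat E lab p.1 a ∧ C2.sat E lab p.2 a) := by
  induction L with
  | nil => simp [negD, eqX, eqY, C2.sat]
  | cons p L ih =>
    have hstep : negD (p :: L) = pprod [(p.1.not, eqY d), (eqX d, p.2.not)] (negD L) := rfl
    rw [hstep, pprod_sat, ih, List.forall_mem_cons]
    have key : (∃ q ∈ [(p.1.not, eqY d), (eqX d, p.2.not)],
        C2.sat E lab q.1 a ∧ C2.sat E lab q.2 a) ↔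
        ¬ (C2.sat E lab p.1 a ∧ C2.sat E lab p.2 a) := by
      constructor
      · rintro ⟨q, hq, hq1, hq2⟩ h
        simp only [List.mem_cons, List.mem_singleton, List.not_mem_nil, or_false] at hq
        rcases hq with rfl | rfl
        · exact hq1 h.1
        · exact hq2 h.2
      · intro h
        by_cases hs : C2.sat E lab p.1 a
        · exact ⟨(eqX d, p.2.not), by simp, rfl, fun h2 => h ⟨hs, h2⟩⟩
        · exact ⟨(p.1.not, eqY d), by simp, hs, rfl⟩
    rw [key]

lemma dnf_sat {b1 b2 b3 : Bool}
    (h1 : E (a C2Var.x) (a C2Var.y) ↔ b1 = true)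
    (h2 : E (a C2Var.y) (a C2Var.x) ↔ b2 = true)
    (h3 : a C2Var.x = a C2Var.y ↔ b3 = true)
    (hirr : ∀ v, ¬ E v v) (φ : C2 d) :
    C2.sat E lab φ a ↔
      ∃ p ∈ dnf b1 b2 b3 φ, C2.sat E lab p.1 a ∧ C2.sat E lab p.2 a := by
  induction φ with
  | eq s t =>
    cases s <;> cases t
    · simp [dnf, C2.sat, eqX, eqY]
    · cases b3 <;> simp_all [dnf, C2.sat, eqX, eqY]
    · cases b3 <;> simp_all [dnf, C2.sat, eqX, eqY] <;>
        first
          | exact fun h => h3 h.symm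
          | exact h3.symm
          | exact fun h => h3 (h.symm)
    · simp [dnf, C2.sat, eqX, eqY]
  | edge s t =>
    cases s <;> cases t
    · simp [dnf, C2.sat, hirr (a C2Var.x)]
    · cases b1 <;> simp_all [dnf, C2.sat, eqX, eqY]
    · cases b2 <;> simp_all [dnf, C2.sat, eqX, eqY]
    · simp [dnf, C2.sat, hirr (a C2Var.y)]
  | pred i s =>
    cases s <;> simp [dnf, C2.sat, eqX, eqY]
  | not ψ ih =>
    rw [show dnf b1 b2 b3 ψ.not = negD (dnf b1 b2 b3 ψ) from rfl, negD_sat,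
      show (C2.sat E lab ψ.not a) = ¬ C2.sat E lab ψ a from rfl, ih]
    push_neg
    simp only [not_and]
  | and ψ χ ih1 ih2 =>
    rw [show dnf b1 b2 b3 (ψ.and χ) = pprod (dnf b1 b2 b3 ψ) (dnf b1 b2 b3 χ) from rfl,
      pprod_sat, ← ih1, ← ih2]
    exact Iff.rfl
  | or ψ χ ih1 ih2 =>
    rw [show dnf b1 b2 b3 (ψ.or χ) = dnf b1 b2 b3 ψ ++ dnf b1 b2 b3 χ from rfl,
      show (C2.sat E lab (ψ.or χ) a) = (C2.sat E lab ψ a ∨ C2.sat E lab χ a) from rfl,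
      ih1, ih2]
    constructor
    · rintro (⟨p, hp, h⟩ | ⟨p, hp, h⟩)
      · exact ⟨p, List.mem_append_left _ hp, h⟩
      · exact ⟨p, List.mem_append_right _ hp, h⟩
    · rintro ⟨p, hp, h⟩
      rcases List.mem_append.mp hp with hp | hp
      · exact Or.inl ⟨p, hp, h⟩
      · exact Or.inr ⟨p, hp, h⟩
  | exN k w ψ ih =>
    cases w <;> simp [dnf, C2.sat, eqX, eqY]

end Sem

end Stmt4

namespace Stmt4

/-- The combined list over the five cross-atom types. -/
def bigL {d : ℕ} (φ : C2 d) : List (C2 d × C2 d × C2 d) :=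
  ((dnf true true false φ).map fun p => (p.1, p.2, gammaA d)) ++
  ((dnf true false false φ).map fun p => (p.1, p.2, gammaB d)) ++
  ((dnf false true false φ).map fun p => (p.1, p.2, gammaC d)) ++
  ((dnf false false false φ).map fun p => (p.1, p.2, gammaD d)) ++
  ((dnf false false true φ).map fun p => (p.1, p.2, gammaE d))

lemma bigL_good {d : ℕ} (φ : C2 d) : ∀ e ∈ bigL φ, Good φ.depth φ.rank (e.1, e.2.1) := by
  intro e he
  simp only [bigL, List.mem_append, List.mem_map] at he
  rcases he with ((((⟨p, hp, rfl⟩ | ⟨p, hp, rfl⟩) | ⟨p, hp, rfl⟩) | ⟨p, hp, rfl⟩) |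
      ⟨p, hp, rfl⟩) <;>
    exact good_dnf _ _ _ _ p hp

lemma forward_piece {d : ℕ} {V : Type} [Fintype V] {E : V → V → Prop}
    {lab : V → Fin d → Bool} {a : C2Var → V} (φ : C2 d) {b1 b2 b3 : Bool} {g : C2 d}
    (hg : C2.sat E lab g a)
    (hmem : ∀ p ∈ dnf b1 b2 b3 φ, (p.1, p.2, g) ∈ bigL φ)
    (h1 : E (a C2Var.x) (a C2Var.y) ↔ b1 = true)
    (h2 : E (a C2Var.y) (a C2Var.x) ↔ b2 = true)
    (h3 : a C2Var.x = a C2Var.y ↔ b3 = true)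
    (hirr : ∀ v, ¬ E v v)
    (hφ : C2.sat E lab φ a) :
    ∃ i : Fin (bigL φ).length,
      C2.sat E lab (((bigL φ).get i).1.and (eqX d)) a ∧
      C2.sat E lab (((bigL φ).get i).2.1.and (eqY d)) a ∧
      C2.sat E lab ((bigL φ).get i).2.2 a := by
  obtain ⟨p, hp, hA, hB⟩ := (dnf_sat E lab a h1 h2 h3 hirr φ).mp hφ
  obtain ⟨i, hi⟩ := List.mem_iff_get.mp (hmem p hp)
  exact ⟨i, by rw [hi]; exact ⟨hA, rfl⟩, by rw [hi]; exact ⟨hB, rfl⟩, by rw [hi]; exact hg⟩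

end Stmt4

/-- every `C²_{ℓ,c}` formula is, over finite directed labelled graphs of
dimension `d`, equivalent to a finite disjunction `⋁ᵢ (αᵢ(x) ∧ βᵢ(y) ∧ γᵢ(x,y))` where the
`αᵢ`, `βᵢ` are `C²_{ℓ,c}` formulas in one free variable and each `γᵢ` is one of the five
fixed formulas. -/
theorem stmt4 (ℓ c d : ℕ) (φ : C2 d) (hdep : φ.depth ≤ ℓ) (hrk : φ.rank ≤ c)
    (hfv : φ.freeVars ⊆ {C2Var.x, C2Var.y}) :
    ∃ (n : ℕ) (α β γ : Fin n → C2 d),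
      (∀ i, (α i).depth ≤ ℓ ∧ (α i).rank ≤ c ∧ (α i).freeVars = {C2Var.x}) ∧
      (∀ i, (β i).depth ≤ ℓ ∧ (β i).rank ≤ c ∧ (β i).freeVars = {C2Var.y}) ∧
      (∀ i, γ i = gammaA d ∨ γ i = gammaB d ∨ γ i = gammaC d ∨ γ i = gammaD d ∨
        γ i = gammaE d) ∧
      ∀ (V : Type) [Fintype V] (E : V → V → Prop), (∀ v, ¬ E v v) →
        ∀ (lab : V → Fin d → Bool) (a : C2Var → V),
          (C2.sat E lab φ a ↔
            ∃ i, C2.sat E lab (α i) a ∧ C2.sat E lab (β i) a ∧ C2.sat E lab (γ i) a) := by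
  classical
  refine ⟨(Stmt4.bigL φ).length,
    fun i => C2.and ((Stmt4.bigL φ).get i).1 (Stmt4.eqX d),
    fun i => C2.and ((Stmt4.bigL φ).get i).2.1 (Stmt4.eqY d),
    fun i => ((Stmt4.bigL φ).get i).2.2, ?_, ?_, ?_, ?_⟩
  · intro i
    obtain ⟨h1, h2, h3, -, -, -⟩ := Stmt4.bigL_good φ _ (List.get_mem (Stmt4.bigL φ) i)
    refine ⟨?_, ?_, ?_⟩
    · simp only [C2.depth, Stmt4.eqX, Nat.max_le]
      exact ⟨h1.trans hdep, Nat.zero_le _⟩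
    · simp only [C2.rank, Stmt4.eqX, Nat.max_le]
      exact ⟨h2.trans hrk, Nat.zero_le _⟩
    · show _ ∪ _ = _
      rw [show (Stmt4.eqX d).freeVars = {C2Var.x} by simp [Stmt4.eqX, C2.freeVars]]
      exact Finset.union_eq_right.mpr h3
  · intro i
    obtain ⟨-, -, -, h1, h2, h3⟩ := Stmt4.bigL_good φ _ (List.get_mem (Stmt4.bigL φ) i)
    refine ⟨?_, ?_, ?_⟩
    · simp only [C2.depth, Stmt4.eqY, Nat.max_le]
      exact ⟨h1.trans hdep, Nat.zero_le _⟩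
    · simp only [C2.rank, Stmt4.eqY, Nat.max_le]
      exact ⟨h2.trans hrk, Nat.zero_le _⟩
    · show _ ∪ _ = _
      rw [show (Stmt4.eqY d).freeVars = {C2Var.y} by simp [Stmt4.eqY, C2.freeVars]]
      exact Finset.union_eq_right.mpr h3
  · intro i
    obtain ⟨e, hE⟩ : ∃ e, (Stmt4.bigL φ).get i = e := ⟨_, rfl⟩
    have he : e ∈ Stmt4.bigL φ := by rw [← hE]; exact List.get_mem _ i
    simp only [Stmt4.bigL, List.mem_append, List.mem_map] at he
    simp only [hE]
    rcases he with ((((⟨p, hp, rfl⟩ | ⟨p, hp, rfl⟩) | ⟨p, hp, rfl⟩) | ⟨p, hp, rfl⟩) |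
        ⟨p, hp, rfl⟩) <;> tauto
  · intro V _ E hirr lab a
    constructor
    · intro hφ
      by_cases h3 : a C2Var.x = a C2Var.y
      · have h1 : ¬ E (a C2Var.x) (a C2Var.y) := by rw [h3]; exact hirr _
        have h2 : ¬ E (a C2Var.y) (a C2Var.x) := by rw [h3]; exact hirr _
        refine Stmt4.forward_piece φ (b1 := false) (b2 := false) (b3 := true) (g := gammaE d) h3 ?_ (by simp [h1]) (by simp [h2])
          (by simp [h3]) hirr hφ
        intro p hp
        simp only [Stmt4.bigL, List.mem_append, List.mem_map]
        exact Or.inr ⟨p, hp, rfl⟩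
      · by_cases h1 : E (a C2Var.x) (a C2Var.y) <;>
          by_cases h2 : E (a C2Var.y) (a C2Var.x)
        · refine Stmt4.forward_piece φ (b1 := true) (b2 := true) (b3 := false) (g := gammaA d) ⟨h1, h2⟩ ?_ (by simp [h1])
            (by simp [h2]) (by simp [h3]) hirr hφ
          intro p hp
          simp only [Stmt4.bigL, List.mem_append, List.mem_map]
          exact Or.inl (Or.inl (Or.inl (Or.inl ⟨p, hp, rfl⟩)))
        · refine Stmt4.forward_piece φ (b1 := true) (b2 := false) (b3 := false) (g := gammaB d) ⟨h1, h2⟩ ?_ (by simp [h1])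
            (by simp [h2]) (by simp [h3]) hirr hφ
          intro p hp
          simp only [Stmt4.bigL, List.mem_append, List.mem_map]
          exact Or.inl (Or.inl (Or.inl (Or.inr ⟨p, hp, rfl⟩)))
        · refine Stmt4.forward_piece φ (b1 := false) (b2 := true) (b3 := false) (g := gammaC d) ⟨h1, h2⟩ ?_ (by simp [h1])
            (by simp [h2]) (by simp [h3]) hirr hφ
          intro p hp
          simp only [Stmt4.bigL, List.mem_append, List.mem_map]
          exact Or.inl (Or.inl (Or.inr ⟨p, hp, rfl⟩))
        · refine Stmt4.forward_piece φ (b1 := false) (b2 := false) (b3 := false) (g := gammaD d) ⟨⟨h1, h2⟩, h3⟩ ?_ (by simp [h1])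
            (by simp [h2]) (by simp [h3]) hirr hφ
          intro p hp
          simp only [Stmt4.bigL, List.mem_append, List.mem_map]
          exact Or.inl (Or.inr ⟨p, hp, rfl⟩)
    · rintro ⟨i, hα, hβ, hγ⟩
      obtain ⟨e, hE⟩ : ∃ e, (Stmt4.bigL φ).get i = e := ⟨_, rfl⟩
      have he : e ∈ Stmt4.bigL φ := by rw [← hE]; exact List.get_mem _ i
      simp only [Stmt4.bigL, List.mem_append, List.mem_map] at he
      simp only [hE] at hα hβ hγ
      rcases he with ((((⟨p, hp, rfl⟩ | ⟨p, hp, rfl⟩) | ⟨p, hp, rfl⟩) | ⟨p, hp, rfl⟩) |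
          ⟨p, hp, rfl⟩)
      · obtain ⟨hg1, hg2⟩ : E (a C2Var.x) (a C2Var.y) ∧ E (a C2Var.y) (a C2Var.x) := hγ
        have hne : ¬ a C2Var.x = a C2Var.y := fun h => hirr _ (h ▸ hg1)
        exact (Stmt4.dnf_sat E lab a (by simp [hg1]) (by simp [hg2]) (by simp [hne])
          hirr φ).mpr ⟨p, hp, hα.1, hβ.1⟩
      · obtain ⟨hg1, hg2⟩ : E (a C2Var.x) (a C2Var.y) ∧
            ¬ E (a C2Var.y) (a C2Var.x) := hγ
        have hne : ¬ a C2Var.x = a C2Var.y := fun h => hirr _ (h ▸ hg1)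
        exact (Stmt4.dnf_sat E lab a (by simp [hg1]) (by simp [hg2]) (by simp [hne])
          hirr φ).mpr ⟨p, hp, hα.1, hβ.1⟩
      · obtain ⟨hg1, hg2⟩ : ¬ E (a C2Var.x) (a C2Var.y) ∧ E (a C2Var.y) (a C2Var.x) := hγ
        have hne : ¬ a C2Var.x = a C2Var.y := fun h => hirr _ (h ▸ hg2)
        exact (Stmt4.dnf_sat E lab a (by simp [hg1]) (by simp [hg2]) (by simp [hne])
          hirr φ).mpr ⟨p, hp, hα.1, hβ.1⟩
      · obtain ⟨⟨hg1, hg2⟩, hg3⟩ : (¬ E (a C2Var.x) (a C2Var.y) ∧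
            ¬ E (a C2Var.y) (a C2Var.x)) ∧ ¬ a C2Var.x = a C2Var.y := hγ
        exact (Stmt4.dnf_sat E lab a (by simp [hg1]) (by simp [hg2]) (by simp [hg3])
          hirr φ).mpr ⟨p, hp, hα.1, hβ.1⟩
      · have hg3 : a C2Var.x = a C2Var.y := hγ
        have hg1 : ¬ E (a C2Var.x) (a C2Var.y) := by rw [hg3]; exact hirr _
        have hg2 : ¬ E (a C2Var.y) (a C2Var.x) := by rw [hg3]; exact hirr _
        exact (Stmt4.dnf_sat E lab a (by simp [hg1]) (by simp [hg2]) (by simp [hg3])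
          hirr φ).mpr ⟨p, hp, hα.1, hβ.1⟩
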